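/- Let M = (ρ, E) be an (n,k,d,r,δ)_a-matroid with designated repair sets {R_x}_{x∈E} (so each R_x satisfies x ∈ R_x, |R_x| ≤ r + δ − 1, and d_{R_x} ≥ δ), with r < k and d = n − k + 1 − (⌈k/r⌉ − 1)(δ − 1). For Y ⊆ E write R_Y = ⋃_{x∈Y} R_x, and call R_Y a nontrivial union if R_x ⊄ R_{Y \ {x}} for every x ∈ Y. Then: (i) ∅ ∈ Z(M); (ii) for each x ∈ E, R_x ∈ Z(M), there is no cyclic flat Z with ∅ ⊊ Z ⊊ R_x (i.e., R_x is an atom of the lattice of cyclic flats), and η(R_x) = δ − 1; (iii) for each Y ⊆ E such that R_Y is a nontrivial union: (c) if |Y| < ⌈k/r⌉ then R_Y ∈ Z(M); (d) if |Y| < ⌈k/r⌉ then ρ(R_Y) = |R_Y| − |Y|(δ − 1); (e) if |Y| ≤ ⌈k/r⌉ then |R_x ∩ R_{Y\{x}}| ≤ |R_x| − δ for each x ∈ Y; (f) if |Y| ≥ ⌈k/r⌉ then the only cyclic flat of M containing R_Y is E. -/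

import Mathlib

/-- A matroid given by an integer-valued rank function on subsets of a finite ground set. -/
structure RankMatroid (α : Type) [DecidableEq α] where
  E : Finset α
  rk : Finset α → ℤ
  rk_nonneg : ∀ X : Finset α, X ⊆ E → 0 ≤ rk X
  rk_le_card : ∀ X : Finset α, X ⊆ E → rk X ≤ X.card
  rk_mono : ∀ X Y : Finset α, X ⊆ Y → Y ⊆ E → rk X ≤ rk Y
  rk_submod : ∀ X Y : Finset α, X ⊆ E → Y ⊆ E → rk (X ∪ Y) + rk (X ∩ Y) ≤ rk X + rk Y

namespace RankMatroid

variable {α : Type} [DecidableEq α]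

/-- The minimum distance `d_X` of the restriction to `X`:
`d_X = min {|Y| : Y ⊆ X, ρ(X \ Y) < ρ(X)}`. -/
noncomputable def dist (M : RankMatroid α) (X : Finset α) : ℕ :=
  sInf {m : ℕ | ∃ Y : Finset α, Y ⊆ X ∧ Y.card = m ∧ M.rk (X \ Y) < M.rk X}

/-- Closure: `cl(X) = {y ∈ E : ρ(X ∪ {y}) = ρ(X)}`. -/
def cl (M : RankMatroid α) (X : Finset α) : Finset α :=
  M.E.filter fun y => M.rk (insert y X) = M.rk X

/-- `X` is cyclic if `ρ(X \ {x}) = ρ(X)` for every `x ∈ X`. -/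
def Cyclic (M : RankMatroid α) (X : Finset α) : Prop :=
  ∀ x ∈ X, M.rk (X.erase x) = M.rk X

/-- Cyclic core: `cyc(X) = {x ∈ X : ρ(X \ {x}) = ρ(X)}`. -/
def cyc (M : RankMatroid α) (X : Finset α) : Finset α :=
  X.filter fun x => M.rk (X.erase x) = M.rk X

/-- A cyclic flat is a set which is both cyclic and a flat. -/
def IsCyclicFlat (M : RankMatroid α) (X : Finset α) : Prop :=
  X ⊆ M.E ∧ M.Cyclic X ∧ M.cl X = X

/-- `Z(M)`: the collection of cyclic flats of `M`. -/
def Z (M : RankMatroid α) : Set (Finset α) := {X | M.IsCyclicFlat X}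

/-- `M` is non-degenerate: every singleton has rank at least one and `d ≥ 2`. -/
def NonDegenerate (M : RankMatroid α) : Prop :=
  (∀ x ∈ M.E, 1 ≤ M.rk {x}) ∧ 2 ≤ M.dist M.E

/-- `R` is a repair set for `x` with parameters `(r, δ)`. -/
def IsRepairSet (M : RankMatroid α) (r δ : ℤ) (x : α) (R : Finset α) : Prop :=
  R ⊆ M.E ∧ x ∈ R ∧ (R.card : ℤ) ≤ r + δ - 1 ∧ δ ≤ (M.dist R : ℤ)

/-- The collection of cyclic flats of the restriction `M|X`. -/
def ZIn (M : RankMatroid α) (X : Finset α) : Set (Finset α) :=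
  {Y | Y ⊆ X ∧ M.Cyclic Y ∧ X.filter (fun z => M.rk (insert z Y) = M.rk Y) = Y}

/-- `FX` is the meet, in the lattice `(Z(M), ⊆)`, of all cyclic flats containing `X`. -/
def IsMeetOfFlatsContaining (M : RankMatroid α) (X FX : Finset α) : Prop :=
  FX ∈ M.Z ∧ (∀ F ∈ M.Z, X ⊆ F → FX ⊆ F) ∧
    ∀ W ∈ M.Z, (∀ F ∈ M.Z, X ⊆ F → W ⊆ F) → W ⊆ FX

end RankMatroid
namespace RankMatroid

variable {α : Type} [DecidableEq α]

lemma rk_empty (M : RankMatroid α) : M.rk ∅ = 0 :=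
  le_antisymm (by simpa using M.rk_le_card ∅ (Finset.empty_subset _))
    (M.rk_nonneg ∅ (Finset.empty_subset _))

lemma rk_insert_le (M : RankMatroid α) {X : Finset α} {y : α} (hX : X ⊆ M.E) (hy : y ∈ M.E) :
    M.rk (insert y X) ≤ M.rk X + 1 := by
  have hyE : ({y} : Finset α) ⊆ M.E := by simpa using hy
  have hs := M.rk_submod X {y} hX hyE
  have h1 : X ∪ {y} = insert y X := by rw [Finset.union_comm, ← Finset.insert_eq]
  have h2 : M.rk {y} ≤ 1 := by simpa using M.rk_le_card {y} hyE
  have h3 : 0 ≤ M.rk (X ∩ {y}) := M.rk_nonneg _ ((Finset.inter_subset_left).trans hX)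
  rw [h1] at hs; linarith

lemma rk_union_card_le (M : RankMatroid α) {X : Finset α} (hX : X ⊆ M.E) :
    ∀ B : Finset α, B ⊆ M.E → M.rk (X ∪ B) ≤ M.rk X + B.card := by
  intro B
  induction B using Finset.induction_on with
  | empty => intro _; simp
  | insert _ _ hb ih =>
    rename_i b B
    intro hBE
    have hbE : b ∈ M.E := hBE (Finset.mem_insert_self _ _)
    have hBE' : B ⊆ M.E := (Finset.subset_insert _ _).trans hBE
    have h1 : X ∪ insert b B = insert b (X ∪ B) := Finset.union_insert _ _ _
    have h2 := M.rk_insert_le (X := X ∪ B) (Finset.union_subset hX hBE') hbE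
    have h3 := ih hBE'
    rw [h1, Finset.card_insert_of_notMem hb]
    push_cast
    linarith

lemma rk_union_le (M : RankMatroid α) {X Y : Finset α} (hX : X ⊆ M.E) (hY : Y ⊆ M.E) :
    M.rk (X ∪ Y) ≤ M.rk X + M.rk Y := by
  have hs := M.rk_submod X Y hX hY
  have h3 : 0 ≤ M.rk (X ∩ Y) := M.rk_nonneg _ ((Finset.inter_subset_left).trans hX)
  linarith

lemma cl_subset_E (M : RankMatroid α) (X : Finset α) : M.cl X ⊆ M.E :=
  Finset.filter_subset _ _

lemma mem_cl (M : RankMatroid α) {X : Finset α} {y : α} :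
    y ∈ M.cl X ↔ y ∈ M.E ∧ M.rk (insert y X) = M.rk X := Finset.mem_filter

lemma subset_cl (M : RankMatroid α) {X : Finset α} (hX : X ⊆ M.E) : X ⊆ M.cl X := by
  intro y hy
  exact M.mem_cl.2 ⟨hX hy, by rw [Finset.insert_eq_self.2 hy]⟩

/-- transfer: if adding `y` to `X` doesn't raise rank, same for any `W ⊇ X`. -/
lemma rk_insert_eq_of (M : RankMatroid α) {X W : Finset α} {y : α}
    (hW : W ⊆ M.E) (hy : y ∈ M.E) (hXW : X ⊆ W) (h : M.rk (insert y X) = M.rk X) :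
    M.rk (insert y W) = M.rk W := by
  have hXE : X ⊆ M.E := hXW.trans hW
  have hyX : insert y X ⊆ M.E := Finset.insert_subset hy hXE
  have hs := M.rk_submod (insert y X) W hyX hW
  have h1 : insert y X ∪ W = insert y W := by
    rw [Finset.insert_union, Finset.union_eq_right.2 hXW]
  have h2 : M.rk X ≤ M.rk (insert y X ∩ W) :=
    M.rk_mono _ _ (Finset.subset_inter ((Finset.subset_insert _ _)) hXW)
      ((Finset.inter_subset_right).trans hW)
  rw [h1] at hs
  have h3 : M.rk W ≤ M.rk (insert y W) :=
    M.rk_mono _ _ (Finset.subset_insert _ _) (Finset.insert_subset hy hW)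
  linarith

lemma cl_mono (M : RankMatroid α) {X W : Finset α} (hXW : X ⊆ W) (hW : W ⊆ M.E) :
    M.cl X ⊆ M.cl W := by
  intro y hy
  obtain ⟨hyE, hyr⟩ := M.mem_cl.1 hy
  exact M.mem_cl.2 ⟨hyE, M.rk_insert_eq_of hW hyE hXW hyr⟩

lemma rk_union_eq_of_subset_cl (M : RankMatroid α) {W : Finset α} (hW : W ⊆ M.E) :
    ∀ S : Finset α, S ⊆ M.cl W → M.rk (W ∪ S) = M.rk W := by
  intro S
  induction S using Finset.induction_on with
  | empty => intro _; simp
  | insert _ _ hb ih =>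
    rename_i y S
    intro hS
    have hy : y ∈ M.cl W := hS (Finset.mem_insert_self _ _)
    have hS' : S ⊆ M.cl W := (Finset.subset_insert _ _).trans hS
    obtain ⟨hyE, hyr⟩ := M.mem_cl.1 hy
    have h1 : W ∪ insert y S = insert y (W ∪ S) := Finset.union_insert _ _ _
    have h2 : M.rk (insert y (W ∪ S)) = M.rk (W ∪ S) :=
      M.rk_insert_eq_of (Finset.union_subset hW ((hS'.trans (M.cl_subset_E W))))
        hyE (Finset.subset_union_left) hyr
    rw [h1, h2, ih hS']

lemma rk_cl (M : RankMatroid α) {X : Finset α} (hX : X ⊆ M.E) : M.rk (M.cl X) = M.rk X := by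
  have h1 : X ∪ M.cl X = M.cl X := Finset.union_eq_right.2 (M.subset_cl hX)
  have := M.rk_union_eq_of_subset_cl hX (M.cl X) (le_refl _)
  rwa [h1] at this

lemma rk_lt_of_not_mem_cl (M : RankMatroid α) {X : Finset α} {y : α}
    (hX : X ⊆ M.E) (hy : y ∈ M.E) (h : y ∉ M.cl X) : M.rk X < M.rk (insert y X) := by
  have hle : M.rk X ≤ M.rk (insert y X) :=
    M.rk_mono _ _ (Finset.subset_insert _ _) (Finset.insert_subset hy hX)
  rcases lt_or_eq_of_le hle with h' | h'
  · exact h'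
  · exact absurd (M.mem_cl.2 ⟨hy, h'.symm⟩) h

lemma exists_not_mem_cl (M : RankMatroid α) {X : Finset α} (hX : X ⊆ M.E)
    (h : M.rk X < M.rk M.E) : ∃ y ∈ M.E, y ∉ M.cl X := by
  by_contra hc
  push_neg at hc
  have h1 : M.rk M.E ≤ M.rk (M.cl X) := M.rk_mono _ _ hc (M.cl_subset_E X)
  rw [M.rk_cl hX] at h1
  linarith

lemma eq_E_of_flat_rk (M : RankMatroid α) {W : Finset α} (hW : W ⊆ M.E)
    (hcl : M.cl W = W) (h : M.rk W = M.rk M.E) : W = M.E := by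
  refine Finset.Subset.antisymm hW (fun y hy => ?_)
  rw [← hcl]
  refine M.mem_cl.2 ⟨hy, le_antisymm ?_ (M.rk_mono _ _ (Finset.subset_insert _ _)
    (Finset.insert_subset hy hW))⟩
  rw [h]
  exact M.rk_mono _ _ (Finset.insert_subset hy hW) le_rfl

lemma nul_mono (M : RankMatroid α) {X W : Finset α} (hXW : X ⊆ W) (hW : W ⊆ M.E) :
    (X.card : ℤ) - M.rk X ≤ (W.card : ℤ) - M.rk W := by
  have h1 : X ∪ (W \ X) = W := Finset.union_sdiff_of_subset hXW
  have h2 := M.rk_union_card_le (hXW.trans hW) (W \ X) ((Finset.sdiff_subset).trans hW)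
  rw [h1] at h2
  have h3 : (W \ X).card = W.card - X.card := Finset.card_sdiff_of_subset hXW
  have h4 : X.card ≤ W.card := Finset.card_le_card hXW
  have : ((W \ X).card : ℤ) = (W.card : ℤ) - X.card := by omega
  linarith

end RankMatroid
namespace RankMatroid

variable {α : Type} [DecidableEq α]

/-- If `δ ≤ dist R'` then removing fewer than `δ` elements keeps the rank. -/
lemma rk_sdiff_eq_of_dist {M : RankMatroid α} {R' : Finset α} {δ : ℤ}
    (hR' : R' ⊆ M.E) (hdist : δ ≤ (M.dist R' : ℤ)) {T : Finset α}
    (hT : T ⊆ R') (hTc : (T.card : ℤ) < δ) : M.rk (R' \ T) = M.rk R' := by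
  have hle : M.rk (R' \ T) ≤ M.rk R' :=
    M.rk_mono _ _ (Finset.sdiff_subset) hR'
  rcases lt_or_eq_of_le hle with h | h
  · exfalso
    have hmem : T.card ∈ {m : ℕ | ∃ Y : Finset α, Y ⊆ R' ∧ Y.card = m ∧ M.rk (R' \ Y) < M.rk R'} :=
      ⟨T, hT, rfl, h⟩
    have := Nat.sInf_le hmem
    have : (M.dist R' : ℤ) ≤ (T.card : ℤ) := by exact_mod_cast this
    linarith
  · exact h

/-- Repair sets are cyclic. -/
lemma cyclic_of_dist {M : RankMatroid α} {R' : Finset α} {δ : ℤ} (hδ : 2 ≤ δ)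
    (hR' : R' ⊆ M.E) (hdist : δ ≤ (M.dist R' : ℤ)) : M.Cyclic R' := by
  intro x hx
  have h1 : ({x} : Finset α) ⊆ R' := by simpa using hx
  have := rk_sdiff_eq_of_dist hR' hdist h1 (by simpa using by linarith : ((({x} : Finset α).card : ℤ) < δ))
  rwa [Finset.erase_eq]

/-- R' ⊆ cl (R' \ T) when |T| < δ. -/
lemma subset_cl_sdiff {M : RankMatroid α} {R' : Finset α} {δ : ℤ}
    (hR' : R' ⊆ M.E) (hdist : δ ≤ (M.dist R' : ℤ)) {T : Finset α}
    (hT : T ⊆ R') (hTc : (T.card : ℤ) < δ) : R' ⊆ M.cl (R' \ T) := by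
  intro z hz
  refine M.mem_cl.2 ⟨hR' hz, ?_⟩
  by_cases hzT : z ∈ R' \ T
  · rw [Finset.insert_eq_self.2 hzT]
  · have h1 : insert z (R' \ T) ⊆ R' := Finset.insert_subset hz (Finset.sdiff_subset)
    have h2 : M.rk (insert z (R' \ T)) ≤ M.rk R' := M.rk_mono _ _ h1 hR'
    have h3 : M.rk (R' \ T) ≤ M.rk (insert z (R' \ T)) :=
      M.rk_mono _ _ (Finset.subset_insert _ _) (h1.trans hR')
    have h4 := rk_sdiff_eq_of_dist hR' hdist hT hTc
    linarith

/-- The key step lemma (Claim C). -/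
lemma stepC {M : RankMatroid α} {R' : Finset α} {δ : ℤ} (hδ : 2 ≤ δ)
    (hR' : R' ⊆ M.E) (hdist : δ ≤ (M.dist R' : ℤ))
    {Z : Finset α} (hZ : Z ⊆ M.E) {y : α} (hy : y ∈ R')
    (hylt : M.rk Z < M.rk (insert y Z)) :
    δ ≤ ((R' \ Z).card : ℤ) ∧
    M.rk (Z ∪ R') ≤ M.rk Z + ((R' \ Z).card : ℤ) - (δ - 1) ∧
    M.rk Z < M.rk (Z ∪ R') ∧
    (Z.card : ℤ) - M.rk Z + (δ - 1) ≤ ((Z ∪ R').card : ℤ) - M.rk (Z ∪ R') := by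
  have hZR : Z ∪ R' ⊆ M.E := Finset.union_subset hZ hR'
  have hlt : M.rk Z < M.rk (Z ∪ R') := by
    have : insert y Z ⊆ Z ∪ R' := Finset.insert_subset (Finset.mem_union_right _ hy)
      (Finset.subset_union_left)
    exact lt_of_lt_of_le hylt (M.rk_mono _ _ this hZR)
  -- subclaim
  have sub : ∀ T : Finset α, T ⊆ R' \ Z → (T.card : ℤ) < δ →
      M.rk (Z ∪ R') ≤ M.rk Z + ((R' \ Z).card : ℤ) - T.card := by
    intro T hT hTc
    have hTR : T ⊆ R' := hT.trans (Finset.sdiff_subset)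
    have hclsub : R' ⊆ M.cl (Z ∪ (R' \ T)) := by
      refine (subset_cl_sdiff hR' hdist hTR hTc).trans (M.cl_mono ?_ ?_)
      · exact Finset.subset_union_right
      · exact Finset.union_subset hZ ((Finset.sdiff_subset).trans hR')
    have h1 : M.rk ((Z ∪ (R' \ T)) ∪ R') = M.rk (Z ∪ (R' \ T)) :=
      M.rk_union_eq_of_subset_cl (Finset.union_subset hZ ((Finset.sdiff_subset).trans hR'))
        R' hclsub
    have hset : (Z ∪ (R' \ T)) ∪ R' = Z ∪ R' := by
      have h0 : R' \ T ∪ R' = R' := Finset.union_eq_right.2 Finset.sdiff_subset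
      rw [Finset.union_assoc, h0]
    rw [hset] at h1
    -- rank bound on Z ∪ (R' \ T)
    have hB : Z ∪ ((R' \ T) \ Z) = Z ∪ (R' \ T) := Finset.union_sdiff_self_eq_union
    have h2 := M.rk_union_card_le hZ ((R' \ T) \ Z)
      (((Finset.sdiff_subset).trans ((Finset.sdiff_subset).trans hR')))
    rw [hB] at h2
    have hcomm : (R' \ T) \ Z = (R' \ Z) \ T := by
      ext z; simp only [Finset.mem_sdiff]; tauto
    have hcard : ((R' \ T) \ Z).card = (R' \ Z).card - T.card := by
      rw [hcomm]; exact Finset.card_sdiff_of_subset hT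
    have hTle : T.card ≤ (R' \ Z).card := Finset.card_le_card hT
    have hcardZ : (((R' \ T) \ Z).card : ℤ) = ((R' \ Z).card : ℤ) - T.card := by omega
    rw [← h1, hcardZ] at h2
    linarith
  have hA : δ ≤ ((R' \ Z).card : ℤ) := by
    by_contra hc
    push_neg at hc
    have := sub (R' \ Z) le_rfl hc
    simp at this
    linarith
  have hTex : ∃ T : Finset α, T ⊆ R' \ Z ∧ T.card = (δ - 1).toNat := by
    obtain ⟨T, hT1, hT2⟩ := Finset.exists_subset_card_eq (s := R' \ Z) (n := (δ - 1).toNat) (by omega)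
    exact ⟨T, hT1, hT2⟩
  obtain ⟨T, hT1, hT2⟩ := hTex
  have hT2' : (T.card : ℤ) = δ - 1 := by rw [hT2]; omega
  have h2 := sub T hT1 (by omega)
  rw [hT2'] at h2
  have hcardU : ((Z ∪ R').card : ℤ) = (Z.card : ℤ) + ((R' \ Z).card : ℤ) := by
    have h3 : Z ∪ R' = Z ∪ (R' \ Z) := Finset.union_sdiff_self_eq_union.symm
    rw [h3, Finset.card_union_of_disjoint Finset.disjoint_sdiff]
    push_cast; ring
  exact ⟨hA, h2, hlt, by linarith⟩

end RankMatroid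
namespace RankMatroid

variable {α : Type} [DecidableEq α]

lemma cyclic_union {M : RankMatroid α} {X Y : Finset α} (hX : X ⊆ M.E) (hY : Y ⊆ M.E)
    (hcX : M.Cyclic X) (hcY : M.Cyclic Y) : M.Cyclic (X ∪ Y) := by
  have hXY : X ∪ Y ⊆ M.E := Finset.union_subset hX hY
  intro x hx
  have key : ∀ A : Finset α, A ⊆ M.E → M.Cyclic A → x ∈ A → A ⊆ X ∪ Y →
      M.rk ((X ∪ Y).erase x) = M.rk (X ∪ Y) := by
    intro A hA hcA hxA hAsub
    have h1 : M.rk (insert x (A.erase x)) = M.rk (A.erase x) := by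
      rw [Finset.insert_erase hxA]
      exact (hcA x hxA).symm
    have h2 : A.erase x ⊆ (X ∪ Y).erase x := Finset.erase_subset_erase _ hAsub
    have h3 : M.rk (insert x ((X ∪ Y).erase x)) = M.rk ((X ∪ Y).erase x) :=
      M.rk_insert_eq_of ((Finset.erase_subset _ _).trans hXY) (hA hxA) h2 h1
    rw [Finset.insert_erase hx] at h3
    exact h3.symm
  rcases Finset.mem_union.1 hx with h | h
  · exact key X hX hcX h Finset.subset_union_left
  · exact key Y hY hcY h Finset.subset_union_right

lemma cyclic_empty (M : RankMatroid α) : M.Cyclic ∅ := by intro x hx; simp at hx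

lemma cyclic_biUnion {M : RankMatroid α} {Y : Finset α} {R : α → Finset α}
    (hsub : ∀ x ∈ Y, R x ⊆ M.E) (hcyc : ∀ x ∈ Y, M.Cyclic (R x)) :
    M.Cyclic (Y.biUnion R) := by
  induction Y using Finset.induction_on with
  | empty => simpa using M.cyclic_empty
  | insert _ _ hb ih =>
    rename_i b Y'
    rw [Finset.biUnion_insert]
    refine cyclic_union (hsub b (Finset.mem_insert_self _ _)) ?_
      (hcyc b (Finset.mem_insert_self _ _)) ?_
    · exact Finset.biUnion_subset.2 fun x hx => hsub x (Finset.mem_insert_of_mem hx)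
    · exact ih (fun x hx => hsub x (Finset.mem_insert_of_mem hx))
        (fun x hx => hcyc x (Finset.mem_insert_of_mem hx))

lemma biUnion_subset_E {M : RankMatroid α} {Y : Finset α} {R : α → Finset α}
    (hsub : ∀ x ∈ Y, R x ⊆ M.E) : Y.biUnion R ⊆ M.E :=
  Finset.biUnion_subset.2 hsub

/-- Basic facts about a repair set. -/
lemma repair_facts {M : RankMatroid α} {r δ : ℤ} (hδ : 2 ≤ δ) (hM : M.NonDegenerate)
    {x : α} {R' : Finset α} (hx : x ∈ M.E) (hrs : M.IsRepairSet r δ x R') :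
    1 ≤ M.rk R' ∧ δ ≤ (R'.card : ℤ) ∧ M.rk R' ≤ (R'.card : ℤ) - (δ - 1) ∧ M.rk R' ≤ r := by
  obtain ⟨hRE, hxR, hcard, hdist⟩ := hrs
  have hrk1 : 1 ≤ M.rk R' := by
    have h1 : ({x} : Finset α) ⊆ R' := by simpa using hxR
    have := hM.1 x hx
    have h2 := M.rk_mono {x} R' h1 hRE
    linarith
  have hcard1 : δ ≤ (R'.card : ℤ) := by
    by_contra hc
    push_neg at hc
    have := rk_sdiff_eq_of_dist hRE hdist (le_refl R') hc
    simp [M.rk_empty] at this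
    linarith
  have hnul : M.rk R' ≤ (R'.card : ℤ) - (δ - 1) := by
    obtain ⟨T, hT1, hT2⟩ := Finset.exists_subset_card_eq (s := R') (n := (δ - 1).toNat) (by omega)
    have hT2' : (T.card : ℤ) = δ - 1 := by rw [hT2]; omega
    have h1 := rk_sdiff_eq_of_dist hRE hdist hT1 (by omega)
    have h2 := M.rk_le_card (R' \ T) ((Finset.sdiff_subset).trans hRE)
    have h3 : (R' \ T).card = R'.card - T.card := Finset.card_sdiff_of_subset hT1
    have h4 : T.card ≤ R'.card := Finset.card_le_card hT1
    rw [← h1]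
    omega
  exact ⟨hrk1, hcard1, hnul, by linarith⟩

lemma rk_biUnion_le {M : RankMatroid α} {r δ : ℤ} (hδ : 2 ≤ δ) (hM : M.NonDegenerate)
    {R : α → Finset α} (hR : ∀ x ∈ M.E, M.IsRepairSet r δ x (R x)) :
    ∀ Y : Finset α, Y ⊆ M.E → M.rk (Y.biUnion R) ≤ (Y.card : ℤ) * r := by
  intro Y
  induction Y using Finset.induction_on with
  | empty => intro _; simp [M.rk_empty]
  | insert _ _ hb ih =>
    rename_i b Y'
    intro hYE
    have hbE : b ∈ M.E := hYE (Finset.mem_insert_self _ _)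
    have hY'E : Y' ⊆ M.E := (Finset.subset_insert _ _).trans hYE
    have hRb : M.rk (R b) ≤ r := (repair_facts hδ hM hbE (hR b hbE)).2.2.2
    have hsub : Y'.biUnion R ⊆ M.E :=
      biUnion_subset_E fun x hx => (hR x (hY'E hx)).1
    rw [Finset.biUnion_insert]
    have h1 := M.rk_union_le (hR b hbE).1 hsub
    have h2 := ih hY'E
    rw [Finset.card_insert_of_notMem hb]
    push_cast
    nlinarith

end RankMatroid
namespace RankMatroid

variable {α : Type} [DecidableEq α]

/-- Chain lemma: grow `X` by repair sets until rank `k`; `F` is the last proper stage. -/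
lemma chain {M : RankMatroid α} {r δ : ℤ} (hδ : 2 ≤ δ)
    {R : α → Finset α} (hR : ∀ x ∈ M.E, M.IsRepairSet r δ x (R x)) :
    ∀ N : ℕ, ∀ X : Finset α, X ⊆ M.E → M.E.card ≤ X.card + N → M.rk X < M.rk M.E →
      ∃ (m : ℕ) (F : Finset α), X ⊆ F ∧ F ⊆ M.E ∧ M.rk F < M.rk M.E ∧
        (X.card : ℤ) - M.rk X + (m : ℤ) * (δ - 1) ≤ (F.card : ℤ) - M.rk F ∧
        M.rk M.E ≤ M.rk X + ((m : ℤ) + 1) * r := by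
  intro N
  induction N with
  | zero =>
    intro X hXE hcard hlt
    have : X = M.E := Finset.eq_of_subset_of_card_le hXE (by omega)
    rw [this] at hlt; exact absurd hlt (lt_irrefl _)
  | succ N ih =>
    intro X hXE hcard hlt
    obtain ⟨y, hyE, hycl⟩ := M.exists_not_mem_cl hXE hlt
    obtain ⟨hRyE, hyRy, hRycard, hRydist⟩ := hR y hyE
    have hylt : M.rk X < M.rk (insert y X) := M.rk_lt_of_not_mem_cl hXE hyE hycl
    obtain ⟨hA, hrkub, hrklt, hnul⟩ := stepC hδ hRyE hRydist hXE hyRy hylt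
    set X' := X ∪ R y with hX'def
    have hX'E : X' ⊆ M.E := Finset.union_subset hXE hRyE
    have hAub : ((R y \ X).card : ℤ) ≤ r + δ - 1 := by
      have := Finset.card_le_card (Finset.sdiff_subset (s := R y) (t := X))
      have h2 : ((R y \ X).card : ℤ) ≤ ((R y).card : ℤ) := by exact_mod_cast this
      linarith
    have hrkub' : M.rk X' ≤ M.rk X + r := by
      calc M.rk X' ≤ M.rk X + ((R y \ X).card : ℤ) - (δ - 1) := hrkub
        _ ≤ M.rk X + r := by linarith
    by_cases hdone : M.rk M.E ≤ M.rk X'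
    · exact ⟨0, X, le_refl _, hXE, hlt, by simp, by push_cast; linarith⟩
    · push_neg at hdone
      have hyX : y ∉ X := fun h => hycl (M.subset_cl hXE h)
      have hcardlt : X.card < X'.card := by
        refine Finset.card_lt_card ⟨Finset.subset_union_left, fun h => hyX (h ?_)⟩
        exact Finset.mem_union_right _ hyRy
      obtain ⟨m, F, h1, h2, h3, h4, h5⟩ := ih X' hX'E (by omega) hdone
      refine ⟨m + 1, F, (Finset.subset_union_left).trans h1, h2, h3, ?_, ?_⟩
      · push_cast
        have : (X.card : ℤ) - M.rk X + (δ - 1) ≤ (X'.card : ℤ) - M.rk X' := hnul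
        push_cast at h4
        linarith
      · push_cast
        push_cast at h5
        linarith

/-- Extend `X` to a set of rank `k - 1` with the same nullity. -/
lemma extend {M : RankMatroid α} :
    ∀ N : ℕ, ∀ X : Finset α, X ⊆ M.E → M.E.card ≤ X.card + N → M.rk X ≤ M.rk M.E - 1 →
      ∃ B : Finset α, X ⊆ B ∧ B ⊆ M.E ∧ M.rk B = M.rk M.E - 1 ∧
        (B.card : ℤ) - M.rk B = (X.card : ℤ) - M.rk X := by
  intro N
  induction N with
  | zero =>
    intro X hXE hcard hle
    have hX : X = M.E := Finset.eq_of_subset_of_card_le hXE (by omega)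
    rw [hX] at hle; linarith
  | succ N ih =>
    intro X hXE hcard hle
    by_cases heq : M.rk X = M.rk M.E - 1
    · exact ⟨X, le_refl _, hXE, heq, rfl⟩
    · have hlt : M.rk X < M.rk M.E := by omega
      obtain ⟨y, hyE, hycl⟩ := M.exists_not_mem_cl hXE hlt
      have hylt : M.rk X < M.rk (insert y X) := M.rk_lt_of_not_mem_cl hXE hyE hycl
      have hyX : y ∉ X := fun h => hycl (M.subset_cl hXE h)
      have hins : M.rk (insert y X) = M.rk X + 1 :=
        le_antisymm (M.rk_insert_le hXE hyE) (by omega)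
      have hcard' : (insert y X).card = X.card + 1 := Finset.card_insert_of_notMem hyX
      obtain ⟨B, h1, h2, h3, h4⟩ := ih (insert y X) (Finset.insert_subset hyE hXE)
        (by omega) (by omega)
      refine ⟨B, (Finset.subset_insert _ _).trans h1, h2, h3, ?_⟩
      rw [h4, hcard', hins]
      push_cast; ring

/-- The master inequality: every set of rank `< k` has nullity at most `(θ-1)(δ-1)`. -/
lemma master {M : RankMatroid α} {r δ : ℤ}
    (hd : (M.dist M.E : ℤ) = (M.E.card : ℤ) - M.rk M.E + 1 -
      (⌈(M.rk M.E : ℚ) / (r : ℚ)⌉ - 1) * (δ - 1))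
    {X : Finset α} (hX : X ⊆ M.E) (hlt : M.rk X < M.rk M.E) :
    (X.card : ℤ) - M.rk X ≤ (⌈(M.rk M.E : ℚ) / (r : ℚ)⌉ - 1) * (δ - 1) := by
  obtain ⟨B, hXB, hBE, hBrk, hBnul⟩ := extend M.E.card X hX (by omega) (by omega)
  set Yk := M.E \ B with hYdef
  have hEY : M.E \ Yk = B := Finset.sdiff_sdiff_eq_self hBE
  have hrkEY : M.rk (M.E \ Yk) < M.rk M.E := by rw [hEY]; omega
  have hmem : Yk.card ∈ {m : ℕ | ∃ Y : Finset α, Y ⊆ M.E ∧ Y.card = m ∧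
      M.rk (M.E \ Y) < M.rk M.E} := ⟨Yk, Finset.sdiff_subset, rfl, hrkEY⟩
  have hdle : M.dist M.E ≤ Yk.card := Nat.sInf_le hmem
  have hdle' : (M.dist M.E : ℤ) ≤ (Yk.card : ℤ) := by exact_mod_cast hdle
  have hYcard : (Yk.card : ℤ) = (M.E.card : ℤ) - B.card := by
    have h1 : Yk.card = M.E.card - B.card := Finset.card_sdiff_of_subset hBE
    have h2 : B.card ≤ M.E.card := Finset.card_le_card hBE
    omega
  have hBcard : (B.card : ℤ) = M.rk M.E - 1 + ((X.card : ℤ) - M.rk X) := by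
    rw [← hBrk, ← hBnul]; ring
  rw [hd] at hdle'
  rw [hYcard, hBcard] at hdle'
  linarith

lemma ceil_le_of_mul {r k a : ℤ} (hr : 1 ≤ r) (h : k ≤ a * r) :
    ⌈(k : ℚ) / (r : ℚ)⌉ ≤ a := by
  rw [Int.ceil_le]
  rw [div_le_iff₀ (by exact_mod_cast hr.trans_lt' zero_lt_one : (0:ℚ) < (r:ℚ))]
  exact_mod_cast h

lemma ceil_pred_mul_lt {r k : ℤ} (hr : 1 ≤ r) :
    (⌈(k : ℚ) / (r : ℚ)⌉ - 1) * r < k := by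
  have hrq : (0:ℚ) < (r:ℚ) := by exact_mod_cast hr.trans_lt' zero_lt_one
  have h1 : (⌈(k : ℚ) / (r : ℚ)⌉ - 1 : ℤ) < ⌈(k : ℚ) / (r : ℚ)⌉ := by omega
  have h2 : ((⌈(k : ℚ) / (r : ℚ)⌉ - 1 : ℤ) : ℚ) < (k : ℚ) / (r : ℚ) := Int.lt_ceil.1 h1
  have h3 : ((⌈(k : ℚ) / (r : ℚ)⌉ - 1 : ℤ) : ℚ) * (r : ℚ) < (k : ℚ) := by
    rw [← lt_div_iff₀ hrq]; exact h2
  exact_mod_cast h3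

lemma two_le_ceil {r k : ℤ} (hr : 1 ≤ r) (hrk : r < k) :
    2 ≤ ⌈(k : ℚ) / (r : ℚ)⌉ := by
  have hrq : (0:ℚ) < (r:ℚ) := by exact_mod_cast hr.trans_lt' zero_lt_one
  have h1 : (1 : ℚ) < (k : ℚ) / (r : ℚ) := by
    rw [lt_div_iff₀ hrq]
    have : (r : ℚ) < (k : ℚ) := by exact_mod_cast hrk
    linarith
  have := Int.lt_ceil.2 (by exact_mod_cast h1 : ((1:ℤ) : ℚ) < (k : ℚ) / (r : ℚ))
  omega

end RankMatroid
namespace RankMatroid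

variable {α : Type} [DecidableEq α]

lemma cl_empty {M : RankMatroid α} (hM : M.NonDegenerate) : M.cl ∅ = ∅ := by
  rw [Finset.eq_empty_iff_forall_notMem]
  intro y hy
  obtain ⟨hyE, hyr⟩ := M.mem_cl.1 hy
  have h1 := hM.1 y hyE
  rw [M.rk_empty] at hyr
  have he : insert y (∅ : Finset α) = {y} := by simp
  rw [he] at hyr
  rw [hyr] at h1
  exact absurd h1 (by norm_num)

lemma nontrivial_hereditary {R : α → Finset α} {Y Y' : Finset α}
    (hsub : Y' ⊆ Y) (hnt : ∀ x ∈ Y, ¬ R x ⊆ (Y.erase x).biUnion R) :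
    ∀ x ∈ Y', ¬ R x ⊆ (Y'.erase x).biUnion R := by
  intro x hx hcon
  refine hnt x (hsub hx) (hcon.trans ?_)
  exact Finset.biUnion_subset_biUnion_of_subset_left _ (Finset.erase_subset_erase _ hsub)

/-- Main induction: unions of repair sets over nontrivial `Y` with `|Y| ≤ θ - 1`
are flats of nullity `|Y|(δ-1)`. -/
lemma mainP {M : RankMatroid α} {r δ : ℤ} (hr : 1 ≤ r) (hδ : 2 ≤ δ) (hM : M.NonDegenerate)
    {R : α → Finset α} (hR : ∀ x ∈ M.E, M.IsRepairSet r δ x (R x))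
    (hd : (M.dist M.E : ℤ) = (M.E.card : ℤ) - M.rk M.E + 1 -
      (⌈(M.rk M.E : ℚ) / (r : ℚ)⌉ - 1) * (δ - 1)) :
    ∀ N : ℕ, ∀ Y : Finset α, Y ⊆ M.E → Y.card ≤ N →
      (∀ x ∈ Y, ¬ R x ⊆ (Y.erase x).biUnion R) →
      (Y.card : ℤ) ≤ ⌈(M.rk M.E : ℚ) / (r : ℚ)⌉ - 1 →
      M.cl (Y.biUnion R) = Y.biUnion R ∧
        ((Y.biUnion R).card : ℤ) - M.rk (Y.biUnion R) = (Y.card : ℤ) * (δ - 1) := by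
  set θ := ⌈(M.rk M.E : ℚ) / (r : ℚ)⌉ with hθdef
  intro N
  induction N with
  | zero =>
    intro Y hYE hYcard hnt hYθ
    have : Y = ∅ := Finset.card_eq_zero.1 (by omega)
    subst this
    simp only [Finset.biUnion_empty, Finset.card_empty, Nat.cast_zero, zero_mul]
    exact ⟨cl_empty hM, by rw [M.rk_empty]; ring⟩
  | succ N ih =>
    intro Y hYE hYcard hnt hYθ
    rcases Finset.eq_empty_or_nonempty Y with hY | hY
    · subst hY
      simp only [Finset.biUnion_empty, Finset.card_empty, Nat.cast_zero, zero_mul]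
      exact ⟨cl_empty hM, by rw [M.rk_empty]; ring⟩
    obtain ⟨x, hx⟩ := hY
    have hxE : x ∈ M.E := hYE hx
    set Y' := Y.erase x with hY'def
    set U' := Y'.biUnion R with hU'def
    set U := Y.biUnion R with hUdef
    have hY'E : Y' ⊆ M.E := (Finset.erase_subset _ _).trans hYE
    have hY'card : Y'.card = Y.card - 1 := Finset.card_erase_of_mem hx
    have hYpos : 1 ≤ Y.card := Finset.card_pos.2 ⟨x, hx⟩
    have hY'cast : (Y'.card : ℤ) = (Y.card : ℤ) - 1 := by omega
    have hnt' : ∀ x' ∈ Y', ¬ R x' ⊆ (Y'.erase x').biUnion R :=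
      nontrivial_hereditary (Finset.erase_subset _ _) hnt
    obtain ⟨hcl', hnul'⟩ := ih Y' hY'E (by omega) hnt' (by omega)
    -- subsets
    have hRsubE : ∀ z ∈ Y, R z ⊆ M.E := fun z hz => (hR z (hYE hz)).1
    have hU'E : U' ⊆ M.E := biUnion_subset_E fun z hz => hRsubE z (Finset.mem_of_mem_erase hz)
    have hUE : U ⊆ M.E := biUnion_subset_E hRsubE
    obtain ⟨hRxE, hxRx, hRxcard, hRxdist⟩ := hR x hxE
    -- U = U' ∪ R x
    have hUeq : U = U' ∪ R x := by
      rw [hUdef, hU'def, hY'def]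
      conv_lhs => rw [← Finset.insert_erase hx]
      rw [Finset.biUnion_insert, Finset.union_comm]
    -- R x not inside U'
    have hnsub : ¬ R x ⊆ U' := hnt x hx
    obtain ⟨y, hyRx, hyU'⟩ := Finset.not_subset.1 hnsub
    have hycl : y ∉ M.cl U' := by rw [hcl']; exact hyU'
    have hylt : M.rk U' < M.rk (insert y U') :=
      M.rk_lt_of_not_mem_cl hU'E (hRxE hyRx) hycl
    obtain ⟨hA, hrkub, hrklt, hnulstep⟩ := stepC hδ hRxE hRxdist hU'E hyRx hylt
    rw [← hUeq] at hnulstep hrklt hrkub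
    -- lower bound on nullity of U
    have hlow : (Y.card : ℤ) * (δ - 1) ≤ (U.card : ℤ) - M.rk U := by
      have : ((Y.card : ℤ) - 1) * (δ - 1) + (δ - 1) = (Y.card : ℤ) * (δ - 1) := by ring
      rw [← this, ← hY'cast, ← hnul']
      exact hnulstep
    -- upper bound on rank of U
    have hrkU : M.rk U ≤ (Y.card : ℤ) * r := rk_biUnion_le hδ hM hR Y hYE
    have hrkUk : M.rk U < M.rk M.E := by
      have h1 : (Y.card : ℤ) * r ≤ (θ - 1) * r :=
        mul_le_mul_of_nonneg_right (by omega) (by omega)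
      have h2 : (θ - 1) * r < M.rk M.E := ceil_pred_mul_lt hr
      linarith
    -- chain from cl U
    have hclUE : M.cl U ⊆ M.E := M.cl_subset_E U
    have hrkclU : M.rk (M.cl U) = M.rk U := M.rk_cl hUE
    obtain ⟨m, F, hF1, hF2, hF3, hF4, hF5⟩ := chain hδ hR M.E.card (M.cl U) hclUE
      (by omega) (by rw [hrkclU]; exact hrkUk)
    have hmaster := master hd hF2 hF3
    rw [← hθdef] at hmaster
    -- θ ≤ Y.card + m + 1
    have hθle : θ ≤ (Y.card : ℤ) + m + 1 := by
      refine ceil_le_of_mul hr ?_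
      have h1 : M.rk M.E ≤ M.rk U + ((m : ℤ) + 1) * r := by rw [← hrkclU]; exact hF5
      have h2 : ((Y.card : ℤ) + m + 1) * r = (Y.card : ℤ) * r + ((m : ℤ) + 1) * r := by ring
      linarith
    -- nullity of cl U ≤ Y.card (δ - 1)
    have hup : ((M.cl U).card : ℤ) - M.rk (M.cl U) ≤ (Y.card : ℤ) * (δ - 1) := by
      have h1 : ((M.cl U).card : ℤ) - M.rk (M.cl U) ≤ (θ - 1 - m) * (δ - 1) := by
        have hid : (θ - 1 - m : ℤ) * (δ - 1) = (θ - 1) * (δ - 1) - (m : ℤ) * (δ - 1) := by ring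
        linarith
      have h2 : (θ - 1 - m : ℤ) ≤ (Y.card : ℤ) := by omega
      exact h1.trans (mul_le_mul_of_nonneg_right h2 (by omega))
    have hmono : (U.card : ℤ) - M.rk U ≤ ((M.cl U).card : ℤ) - M.rk (M.cl U) :=
      M.nul_mono (M.subset_cl hUE) hclUE
    have hnulU : (U.card : ℤ) - M.rk U = (Y.card : ℤ) * (δ - 1) := le_antisymm (by linarith) hlow
    have h5 : ((M.cl U).card : ℤ) - M.rk (M.cl U) = (U.card : ℤ) - M.rk U :=
      le_antisymm (by linarith) hmono
    have hcardeq : (M.cl U).card = U.card := by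
      have h6 : ((M.cl U).card : ℤ) = (U.card : ℤ) := by rw [hrkclU] at h5; linarith
      exact_mod_cast h6
    have hcl : M.cl U = U :=
      (Finset.eq_of_subset_of_card_le (M.subset_cl hUE) (by omega)).symm
    exact ⟨hcl, hnulU⟩

end RankMatroid
/-- Structure theorem for Singleton-optimal `(n,k,d,r,δ)_a`-matroids. -/
theorem stmt14 {α : Type} [DecidableEq α] (M : RankMatroid α) (r δ : ℤ)
    (hr : 1 ≤ r) (hδ : 2 ≤ δ) (hM : M.NonDegenerate)
    (hrk : r < M.rk M.E)
    (R : α → Finset α) (hR : ∀ x ∈ M.E, M.IsRepairSet r δ x (R x))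
    (hd : (M.dist M.E : ℤ) = (M.E.card : ℤ) - M.rk M.E + 1 -
      (⌈(M.rk M.E : ℚ) / (r : ℚ)⌉ - 1) * (δ - 1)) :
    (∅ ∈ M.Z) ∧
    (∀ x ∈ M.E, R x ∈ M.Z ∧ (¬ ∃ W ∈ M.Z, ∅ ⊂ W ∧ W ⊂ R x) ∧
      ((R x).card : ℤ) - M.rk (R x) = δ - 1) ∧
    (∀ Y ⊆ M.E, (∀ x ∈ Y, ¬ R x ⊆ (Y.erase x).biUnion R) →
      (((Y.card : ℤ) < ⌈(M.rk M.E : ℚ) / (r : ℚ)⌉ → Y.biUnion R ∈ M.Z) ∧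
       ((Y.card : ℤ) < ⌈(M.rk M.E : ℚ) / (r : ℚ)⌉ →
          M.rk (Y.biUnion R) = ((Y.biUnion R).card : ℤ) - (Y.card : ℤ) * (δ - 1)) ∧
       ((Y.card : ℤ) ≤ ⌈(M.rk M.E : ℚ) / (r : ℚ)⌉ → ∀ x ∈ Y,
          ((R x ∩ (Y.erase x).biUnion R).card : ℤ) ≤ ((R x).card : ℤ) - δ) ∧
       ((⌈(M.rk M.E : ℚ) / (r : ℚ)⌉ ≤ (Y.card : ℤ)) → ∀ W ∈ M.Z,
          Y.biUnion R ⊆ W → W = M.E))) := by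
  set θ := ⌈(M.rk M.E : ℚ) / (r : ℚ)⌉ with hθdef
  have hθ2 : 2 ≤ θ := RankMatroid.two_le_ceil hr hrk
  have hmain := RankMatroid.mainP hr hδ hM hR hd
  rw [← hθdef] at hmain
  -- the nullity of each repair set is δ - 1, and each is a cyclic flat
  have hRx : ∀ x ∈ M.E, M.cl (R x) = R x ∧ ((R x).card : ℤ) - M.rk (R x) = δ - 1 := by
    intro x hx
    obtain ⟨hRxE, hxRx, hRxcard, hRxdist⟩ := hR x hx
    have hnt : ∀ x' ∈ ({x} : Finset α), ¬ R x' ⊆ (({x} : Finset α).erase x').biUnion R := by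
      intro x' hx'
      rw [Finset.mem_singleton] at hx'
      subst hx'
      rw [Finset.erase_singleton, Finset.biUnion_empty]
      intro hcon
      simpa using hcon hxRx
    have hsing : ({x} : Finset α) ⊆ M.E := by simpa using hx
    obtain ⟨h1, h2⟩ := hmain 1 {x} hsing (by simp) hnt (by simp; omega)
    rw [Finset.singleton_biUnion] at h1 h2
    simp only [Finset.card_singleton, Nat.cast_one, one_mul] at h2
    exact ⟨h1, h2⟩
  refine ⟨⟨Finset.empty_subset _, M.cyclic_empty, RankMatroid.cl_empty hM⟩, ?_, ?_⟩
  · -- part (ii)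
    intro x hx
    obtain ⟨hRxE, hxRx, hRxcard, hRxdist⟩ := hR x hx
    obtain ⟨hcl, hnul⟩ := hRx x hx
    refine ⟨⟨hRxE, RankMatroid.cyclic_of_dist hδ hRxE hRxdist, hcl⟩, ?_, hnul⟩
    rintro ⟨W, ⟨hWE, hWcyc, hWcl⟩, hW1, hW2⟩
    obtain ⟨w, hw, -⟩ := Finset.exists_of_ssubset hW1
    have hWnul : 1 ≤ (W.card : ℤ) - M.rk W := by
      have h1 : M.rk W = M.rk (W.erase w) := (hWcyc w hw).symm
      have h2 := M.rk_le_card (W.erase w) ((Finset.erase_subset _ _).trans hWE)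
      have h3 : (W.erase w).card = W.card - 1 := Finset.card_erase_of_mem hw
      have h4 : 1 ≤ W.card := Finset.card_pos.2 ⟨w, hw⟩
      rw [h1]
      omega
    obtain ⟨y, hyRx, hyW⟩ := Finset.exists_of_ssubset hW2
    have hylt : M.rk W < M.rk (insert y W) :=
      M.rk_lt_of_not_mem_cl hWE (hRxE hyRx) (by rw [hWcl]; exact hyW)
    obtain ⟨-, -, -, hstep⟩ := RankMatroid.stepC hδ hRxE hRxdist hWE hyRx hylt
    rw [Finset.union_eq_right.2 hW2.subset] at hstep
    linarith
  · -- part (iii)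
    intro Y hYE hnt
    have hcd : (Y.card : ℤ) < θ →
        M.cl (Y.biUnion R) = Y.biUnion R ∧
          ((Y.biUnion R).card : ℤ) - M.rk (Y.biUnion R) = (Y.card : ℤ) * (δ - 1) := by
      intro hYθ
      exact hmain Y.card Y hYE le_rfl hnt (by omega)
    have hUE : Y.biUnion R ⊆ M.E :=
      RankMatroid.biUnion_subset_E fun z hz => (hR z (hYE hz)).1
    refine ⟨?_, ?_, ?_, ?_⟩
    · intro hYθ
      obtain ⟨h1, _⟩ := hcd hYθ
      refine ⟨hUE, ?_, h1⟩
      exact RankMatroid.cyclic_biUnion (fun z hz => (hR z (hYE hz)).1)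
        (fun z hz => RankMatroid.cyclic_of_dist hδ (hR z (hYE hz)).1 (hR z (hYE hz)).2.2.2)
    · intro hYθ
      obtain ⟨_, h2⟩ := hcd hYθ
      linarith
    · -- part (e)
      intro hYθ x hx
      have hxE : x ∈ M.E := hYE hx
      obtain ⟨hRxE, hxRx, hRxcard, hRxdist⟩ := hR x hxE
      set Y' := Y.erase x with hY'def
      set U' := Y'.biUnion R with hU'def
      have hY'E : Y' ⊆ M.E := (Finset.erase_subset _ _).trans hYE
      have hY'card : Y'.card = Y.card - 1 := Finset.card_erase_of_mem hx
      have hYpos : 1 ≤ Y.card := Finset.card_pos.2 ⟨x, hx⟩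
      have hnt' : ∀ x' ∈ Y', ¬ R x' ⊆ (Y'.erase x').biUnion R :=
        RankMatroid.nontrivial_hereditary (Finset.erase_subset _ _) hnt
      obtain ⟨hcl', _⟩ := hmain Y'.card Y' hY'E le_rfl hnt' (by omega)
      rw [← hU'def] at hcl'
      have hU'E : U' ⊆ M.E :=
        RankMatroid.biUnion_subset_E fun z hz => (hR z (hY'E hz)).1
      obtain ⟨y, hyRx, hyU'⟩ := Finset.not_subset.1 (hnt x hx)
      have hylt : M.rk U' < M.rk (insert y U') :=
        M.rk_lt_of_not_mem_cl hU'E (hRxE hyRx) (by rw [hcl']; exact hyU')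
      obtain ⟨hA, -, -, -⟩ := RankMatroid.stepC hδ hRxE hRxdist hU'E hyRx hylt
      have hc := Finset.card_sdiff_add_card_inter (R x) U'
      omega
    · -- part (f)
      intro hYθ W hW hUW
      obtain ⟨hWE, hWcyc, hWcl⟩ := hW
      by_contra hne
      have hWlt : M.rk W < M.rk M.E := by
        rcases lt_or_eq_of_le (M.rk_mono W M.E hWE le_rfl) with h | h
        · exact h
        · exact absurd (M.eq_E_of_flat_rk hWE hWcl h) hne
      have hmaster := RankMatroid.master hd hWE hWlt
      rw [← hθdef] at hmaster
      -- choose a subset of Y of size θ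
      obtain ⟨Y'', hY''sub, hY''card⟩ :=
        Finset.exists_subset_card_eq (s := Y) (n := θ.toNat) (by omega)
      have hY''cast : (Y''.card : ℤ) = θ := by rw [hY''card]; omega
      have hY''ne : Y''.Nonempty := Finset.card_pos.1 (by omega)
      obtain ⟨x, hx⟩ := hY''ne
      have hxE : x ∈ M.E := hYE (hY''sub hx)
      obtain ⟨hRxE, hxRx, hRxcard, hRxdist⟩ := hR x hxE
      set Y''' := Y''.erase x with hY'''def
      set U''' := Y'''.biUnion R with hU'''def
      have hY'''E : Y''' ⊆ M.E := ((Finset.erase_subset _ _).trans hY''sub).trans hYE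
      have hY'''card : Y'''.card = Y''.card - 1 := Finset.card_erase_of_mem hx
      have hY''pos : 1 ≤ Y''.card := Finset.card_pos.2 ⟨x, hx⟩
      have hnt'' : ∀ x' ∈ Y'', ¬ R x' ⊆ (Y''.erase x').biUnion R :=
        RankMatroid.nontrivial_hereditary hY''sub hnt
      have hnt''' : ∀ x' ∈ Y''', ¬ R x' ⊆ (Y'''.erase x').biUnion R :=
        RankMatroid.nontrivial_hereditary (Finset.erase_subset _ _) hnt''
      obtain ⟨hcl''', hnul'''⟩ := hmain Y'''.card Y''' hY'''E le_rfl hnt''' (by omega)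
      rw [← hU'''def] at hcl''' hnul'''
      have hU'''E : U''' ⊆ M.E :=
        RankMatroid.biUnion_subset_E fun z hz => (hR z (hY'''E hz)).1
      obtain ⟨y, hyRx, hyU'''⟩ := Finset.not_subset.1 (hnt'' x hx)
      have hylt : M.rk U''' < M.rk (insert y U''') :=
        M.rk_lt_of_not_mem_cl hU'''E (hRxE hyRx) (by rw [hcl''']; exact hyU''')
      obtain ⟨-, -, -, hstep⟩ := RankMatroid.stepC hδ hRxE hRxdist hU'''E hyRx hylt
      -- U''' ∪ R x = Y''.biUnion R ⊆ Y.biUnion R ⊆ W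
      have hUeq : U''' ∪ R x = Y''.biUnion R := by
        rw [hU'''def, hY'''def]
        conv_rhs => rw [← Finset.insert_erase hx]
        rw [Finset.biUnion_insert, Finset.union_comm]
      have hsubW : U''' ∪ R x ⊆ W := by
        rw [hUeq]
        exact (Finset.biUnion_subset_biUnion_of_subset_left _ hY''sub).trans hUW
      have hmono : ((U''' ∪ R x).card : ℤ) - M.rk (U''' ∪ R x) ≤ (W.card : ℤ) - M.rk W :=
        M.nul_mono hsubW hWE
      have hcast : (Y'''.card : ℤ) = θ - 1 := by omega
      rw [hcast] at hnul'''
      have hid : (θ - 1) * (δ - 1) + (δ - 1) = θ * (δ - 1) := by ring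
      have hid2 : θ * (δ - 1) - (θ - 1) * (δ - 1) = δ - 1 := by ring
      linarith
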